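/- Let f : ℝ² → ℝ² be a C² vector field compactly supported in 𝔻. Then T₁f(x) = 0 for all x ∈ ℝ² if and only if there exists a C³ scalar function φ : ℝ² → ℝ supported in 𝔻 such that f = ∇⊥φ = (−∂φ/∂x₂, ∂φ/∂x₁). -/

import Mathlib

open MeasureTheory

noncomputable section

/-- Euclidean dot product on `ℝ × ℝ`. -/
def dot (a b : ℝ × ℝ) : ℝ := a.1 * b.1 + a.2 * b.2

/-- Rotation by `π/2`: `w⊥ = (−w₂, w₁)`. -/
def perp (w : ℝ × ℝ) : ℝ × ℝ := (-w.2, w.1)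

/-- The open unit disc in `ℝ²`. -/
def disc : Set (ℝ × ℝ) := {p : ℝ × ℝ | p.1 ^ 2 + p.2 ^ 2 < 1}

/-- Perpendicular gradient `∇⊥φ = (−∂φ/∂x₂, ∂φ/∂x₁)`. -/
def pgrad (φ : ℝ × ℝ → ℝ) (x : ℝ × ℝ) : ℝ × ℝ :=
  (-(fderiv ℝ φ x (0, 1)), fderiv ℝ φ x (1, 0))

/-- Transverse V-line transform with weight `α = 1`. -/
def T1 (u v : ℝ × ℝ → ℝ × ℝ) (f : ℝ × ℝ → ℝ × ℝ) (x : ℝ × ℝ) : ℝ :=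
  (- ∫ t in Set.Ioi (0 : ℝ), dot (perp (u x)) (f (x + t • u x))) +
    ∫ t in Set.Ioi (0 : ℝ), dot (perp (v x)) (f (x + t • v x))

open Set

namespace VLT

/-- far points on a ray are outside the disc -/
lemma notin_disc {c : ℝ × ℝ} (hc : dot c c = 1) (x : ℝ × ℝ) {t : ℝ}
    (ht : 2 * (|x.1| + |x.2|) + 1 ≤ t) : x + t • c ∉ disc := by
  simp only [disc, dot, mem_setOf_eq, not_lt, Prod.fst_add, Prod.snd_add, Prod.smul_fst,
    Prod.smul_snd, smul_eq_mul] at hc ⊢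
  have hc1 : |c.1| ≤ 1 := by nlinarith [abs_nonneg c.1, sq_abs c.1, sq_abs c.2, abs_nonneg c.2]
  have hc2 : |c.2| ≤ 1 := by nlinarith [abs_nonneg c.1, sq_abs c.1, sq_abs c.2, abs_nonneg c.2]
  have h1 : x.1 * c.1 ≥ -|x.1| := by
    have := neg_abs_le (x.1 * c.1)
    have h := abs_mul x.1 c.1
    nlinarith [abs_nonneg x.1]
  have h2 : x.2 * c.2 ≥ -|x.2| := by
    have := neg_abs_le (x.2 * c.2)
    have h := abs_mul x.2 c.2
    nlinarith [abs_nonneg x.2]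
  have ht0 : (0:ℝ) ≤ t := by nlinarith [abs_nonneg x.1, abs_nonneg x.2]
  have k1 : t * -|x.1| ≤ t * (x.1 * c.1) := mul_le_mul_of_nonneg_left h1 ht0
  have k2 : t * -|x.2| ≤ t * (x.2 * c.2) := mul_le_mul_of_nonneg_left h2 ht0
  have k3 : 0 ≤ t * (t - 2 * (|x.1| + |x.2|) - 1) := by
    apply mul_nonneg ht0; linarith
  have hcc : t ^ 2 * (c.1 * c.1 + c.2 * c.2) = t ^ 2 * 1 := by rw [hc]
  nlinarith [sq_nonneg x.1, sq_nonneg x.2, abs_nonneg x.1, abs_nonneg x.2]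

lemma far_zero {g : ℝ × ℝ → ℝ} (hsupp : tsupport g ⊆ disc) {c : ℝ × ℝ} (hc : dot c c = 1)
    (x : ℝ × ℝ) {t : ℝ} (ht : 2 * (|x.1| + |x.2|) + 1 ≤ t) : g (x + t • c) = 0 :=
  image_eq_zero_of_notMem_tsupport (fun hm => notin_disc hc x ht (hsupp hm))

lemma far_zero' {f : ℝ × ℝ → ℝ × ℝ} (hsupp : tsupport f ⊆ disc) {c : ℝ × ℝ} (hc : dot c c = 1)
    (x : ℝ × ℝ) {t : ℝ} (ht : 2 * (|x.1| + |x.2|) + 1 ≤ t) : f (x + t • c) = 0 :=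
  image_eq_zero_of_notMem_tsupport (fun hm => notin_disc hc x ht (hsupp hm))


/-- integrand along a ray of the field `w` -/
def rayF (w f : ℝ × ℝ → ℝ × ℝ) (x : ℝ × ℝ) (t : ℝ) : ℝ :=
  dot (perp (w x)) (f (x + t • w x))

/-- candidate potential -/
def phi (w f : ℝ × ℝ → ℝ × ℝ) (x : ℝ × ℝ) : ℝ :=
  -∫ t in Set.Ioi (0 : ℝ), rayF w f x t

variable {w f : ℝ × ℝ → ℝ × ℝ}

lemma contDiff_G (hw : ContDiff ℝ 1 w) (hf : ContDiff ℝ 2 f) :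
    ContDiff ℝ 1 (fun p : (ℝ × ℝ) × ℝ => rayF w f p.1 p.2) := by
  have h1 : ContDiff ℝ 1 (fun p : (ℝ × ℝ) × ℝ => p.1 + p.2 • w p.1) :=
    contDiff_fst.add (contDiff_snd.smul (hw.comp contDiff_fst))
  have h2 : ContDiff ℝ 1 (fun p : (ℝ × ℝ) × ℝ => f (p.1 + p.2 • w p.1)) :=
    (hf.of_le (by norm_num)).comp h1
  exact ((((hw.comp contDiff_fst).snd.neg).mul h2.fst)).add
    (((hw.comp contDiff_fst).fst).mul h2.snd)

lemma cont_rayF (hw : ContDiff ℝ 1 w) (hf : ContDiff ℝ 2 f) (x : ℝ × ℝ) :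
    Continuous (rayF w f x) :=
  (contDiff_G hw hf).continuous.comp (Continuous.prodMk_right x)

lemma rayF_far (hsupp : tsupport f ⊆ disc) (hunit : ∀ x, dot (w x) (w x) = 1)
    (x : ℝ × ℝ) {t : ℝ} (ht : 2 * (|x.1| + |x.2|) + 1 ≤ t) : rayF w f x t = 0 := by
  unfold rayF
  rw [far_zero' hsupp (hunit x) x ht]
  simp [dot]

lemma integrableOn_rayF (hw : ContDiff ℝ 1 w) (hf : ContDiff ℝ 2 f)
    (hsupp : tsupport f ⊆ disc) (hunit : ∀ x, dot (w x) (w x) = 1) (x : ℝ × ℝ) :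
    IntegrableOn (rayF w f x) (Set.Ioi (0 : ℝ)) := by
  set T := 2 * (|x.1| + |x.2|) + 1 with hT
  have hT0 : (0 : ℝ) ≤ T := by positivity
  have hsplit : Set.Ioi (0 : ℝ) = Set.Ioc 0 T ∪ Set.Ioi T := (Set.Ioc_union_Ioi_eq_Ioi hT0).symm
  rw [hsplit]
  refine IntegrableOn.union ?_ ?_
  · exact (cont_rayF hw hf x).integrableOn_Ioc
  · refine (integrableOn_congr_fun (f := fun _ => (0:ℝ)) ?_ measurableSet_Ioi).mp
      (integrableOn_zero)
    intro t ht
    exact (rayF_far hsupp hunit x (le_of_lt ht)).symm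

lemma integrableOn_rayF' (hw : ContDiff ℝ 1 w) (hf : ContDiff ℝ 2 f)
    (hsupp : tsupport f ⊆ disc) (hunit : ∀ x, dot (w x) (w x) = 1) (x : ℝ × ℝ) {s : ℝ}
    (hs : 0 ≤ s) : IntegrableOn (rayF w f x) (Set.Ioi s) :=
  (integrableOn_rayF hw hf hsupp hunit x).mono (Set.Ioi_subset_Ioi hs) le_rfl

lemma phi_shift (hline : ∀ (x : ℝ × ℝ) (t : ℝ), 0 ≤ t → w (x + t • w x) = w x)
    (x : ℝ × ℝ) {s : ℝ} (hs : 0 ≤ s) :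
    phi w f (x + s • w x) = -∫ t in Set.Ioi s, rayF w f x t := by
  have hkey : ∀ t : ℝ, rayF w f (x + s • w x) t = rayF w f x (s + t) := by
    intro t
    unfold rayF
    rw [hline x s hs]
    congr 2
    rw [add_smul]
    abel
  unfold phi
  rw [show (∫ t in Set.Ioi (0:ℝ), rayF w f (x + s • w x) t)
      = ∫ t in Set.Ioi (0:ℝ), rayF w f x (s + t) from
    setIntegral_congr_fun measurableSet_Ioi (fun t _ => hkey t)]
  congr 1
  have hind : ∀ t : ℝ, (Set.Ioi (0:ℝ)).indicator (fun t => rayF w f x (s + t)) t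
      = (Set.Ioi s).indicator (rayF w f x) (s + t) := by
    intro t
    by_cases h : 0 < t
    · rw [Set.indicator_of_mem (Set.mem_Ioi.mpr h),
        Set.indicator_of_mem (Set.mem_Ioi.mpr (by linarith))]
    · rw [Set.indicator_of_notMem (fun hh => h (Set.mem_Ioi.mp hh)),
        Set.indicator_of_notMem (fun hh => h (by have := Set.mem_Ioi.mp hh; linarith))]
  calc ∫ t in Set.Ioi (0:ℝ), rayF w f x (s + t)
      = ∫ t, (Set.Ioi (0:ℝ)).indicator (fun t => rayF w f x (s + t)) t := by
        rw [integral_indicator measurableSet_Ioi]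
    _ = ∫ t, (Set.Ioi s).indicator (rayF w f x) (s + t) := by simp_rw [hind]
    _ = ∫ t, (Set.Ioi s).indicator (rayF w f x) t :=
        integral_add_left_eq_self ((Set.Ioi s).indicator (rayF w f x)) s
    _ = ∫ t in Set.Ioi s, rayF w f x t := integral_indicator measurableSet_Ioi

lemma phi_ray (hw : ContDiff ℝ 1 w) (hf : ContDiff ℝ 2 f)
    (hsupp : tsupport f ⊆ disc) (hunit : ∀ x, dot (w x) (w x) = 1)
    (hline : ∀ (x : ℝ × ℝ) (t : ℝ), 0 ≤ t → w (x + t • w x) = w x)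
    (x : ℝ × ℝ) {s : ℝ} (hs : 0 ≤ s) :
    phi w f (x + s • w x) = phi w f x + ∫ t in (0:ℝ)..s, rayF w f x t := by
  rw [phi_shift hline x hs]
  have hsplit : Set.Ioi (0 : ℝ) = Set.Ioc 0 s ∪ Set.Ioi s := (Set.Ioc_union_Ioi_eq_Ioi hs).symm
  have h1 : IntegrableOn (rayF w f x) (Set.Ioc 0 s) := (cont_rayF hw hf x).integrableOn_Ioc
  have h2 : IntegrableOn (rayF w f x) (Set.Ioi s) := integrableOn_rayF' hw hf hsupp hunit x hs
  have := setIntegral_union (Set.Ioc_disjoint_Ioi le_rfl) measurableSet_Ioi h1 h2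
    (f := rayF w f x) (μ := volume)
  unfold phi
  rw [← hsplit] at this
  rw [intervalIntegral.integral_of_le hs, this]
  ring

lemma phi_far (hline : ∀ (x : ℝ × ℝ) (t : ℝ), 0 ≤ t → w (x + t • w x) = w x)
    (hsupp : tsupport f ⊆ disc) (hunit : ∀ x, dot (w x) (w x) = 1)
    (x : ℝ × ℝ) {s : ℝ} (hs : 2 * (|x.1| + |x.2|) + 1 ≤ s) :
    phi w f (x + s • w x) = 0 := by
  have hs0 : (0:ℝ) ≤ s := le_trans (by positivity) hs
  rw [phi_shift hline x hs0]
  rw [setIntegral_congr_fun (f := rayF w f x) (g := fun _ => (0:ℝ)) measurableSet_Ioi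
    (fun t ht => rayF_far hsupp hunit x (le_trans hs (le_of_lt ht)))]
  simp


open Metric in
lemma phi_hasFDerivAt (hw : ContDiff ℝ 1 w) (hf : ContDiff ℝ 2 f)
    (hsupp : tsupport f ⊆ disc) (hunit : ∀ x, dot (w x) (w x) = 1) (x₀ : ℝ × ℝ) :
    ∃ L : (ℝ × ℝ) →L[ℝ] ℝ, HasFDerivAt (phi w f) L x₀ := by
  classical
  set G : (ℝ × ℝ) × ℝ → ℝ := fun p => rayF w f p.1 p.2 with hGdef
  have hG : ContDiff ℝ 1 G := contDiff_G hw hf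
  set F' : (ℝ × ℝ) → ℝ → ((ℝ × ℝ) →L[ℝ] ℝ) :=
    fun x t => (fderiv ℝ G (x, t)).comp (ContinuousLinearMap.inl ℝ (ℝ × ℝ) ℝ) with hF'def
  have hdiff : ∀ (t : ℝ) (x : ℝ × ℝ), HasFDerivAt (fun y => rayF w f y t) (F' x t) x := by
    intro t x
    have h1 : HasFDerivAt G (fderiv ℝ G (x, t)) (x, t) :=
      (hG.differentiable one_ne_zero (x, t)).hasFDerivAt
    have h2 : HasFDerivAt (fun y : ℝ × ℝ => (y, t))
        (ContinuousLinearMap.inl ℝ (ℝ × ℝ) ℝ) x := hasFDerivAt_prodMk_left x t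
    exact h1.comp x h2
  have hF'cont : Continuous (fun p : (ℝ × ℝ) × ℝ => F' p.1 p.2) := by
    have h1 : Continuous (fun p : (ℝ × ℝ) × ℝ => fderiv ℝ G p) := hG.continuous_fderiv one_ne_zero
    exact Continuous.clm_comp (𝕜 := ℝ) h1 continuous_const
  set m₀ : ℝ := |x₀.1| + |x₀.2| with hm₀
  set R : ℝ := 2 * m₀ + 5 with hRdef
  have hR0 : (0:ℝ) < R := by positivity
  -- vanishing of G on ball × [R, ∞)
  have hGzero : ∀ x ∈ ball x₀ 1, ∀ t : ℝ, R ≤ t → G (x, t) = 0 := by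
    intro x hx t ht
    refine rayF_far hsupp hunit x ?_
    have h1 : |x.1 - x₀.1| ≤ 1 ∧ |x.2 - x₀.2| ≤ 1 := by
      rw [mem_ball] at hx
      constructor
      · exact le_trans (le_trans (le_max_left _ _) (le_of_lt hx)) le_rfl
      · exact le_trans (le_trans (le_max_right _ _) (le_of_lt hx)) le_rfl
    have h2 : |x.1| ≤ |x₀.1| + 1 := by
      have := abs_sub_abs_le_abs_sub x.1 x₀.1
      linarith [h1.1]
    have h3 : |x.2| ≤ |x₀.2| + 1 := by
      have := abs_sub_abs_le_abs_sub x.2 x₀.2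
      linarith [h1.2]
    simp only [hRdef, hm₀] at ht
    linarith
  have hF'zero : ∀ x ∈ ball x₀ 1, ∀ t : ℝ, R < t → F' x t = 0 := by
    intro x hx t ht
    have hopen : IsOpen (ball x₀ 1 ×ˢ Set.Ioi R) := (isOpen_ball.prod isOpen_Ioi)
    have hmem : (x, t) ∈ ball x₀ 1 ×ˢ Set.Ioi R := ⟨hx, ht⟩
    have hev : G =ᶠ[nhds (x, t)] (fun _ => (0:ℝ)) := by
      filter_upwards [hopen.mem_nhds hmem] with p hp
      exact hGzero p.1 hp.1 p.2 (le_of_lt hp.2)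
    have : fderiv ℝ G (x, t) = 0 := by
      rw [hev.fderiv_eq, fderiv_fun_const]
      rfl
    simp [hF'def, this]
  -- bound on compact set
  obtain ⟨C, hC⟩ : ∃ C, ∀ p ∈ closedBall x₀ 1 ×ˢ Set.Icc 0 R,
      ‖F' p.1 p.2‖ ≤ C := by
    obtain ⟨C, hC⟩ := ((isCompact_closedBall x₀ 1).prod isCompact_Icc).exists_bound_of_continuousOn
      ((hF'cont.norm).continuousOn (s := closedBall x₀ 1 ×ˢ Set.Icc 0 R))
    exact ⟨C, fun p hp => by simpa using hC p hp⟩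
  set bound : ℝ → ℝ := (Set.Icc (0:ℝ) R).indicator (fun _ => C) with hbdef
  have hC0 : 0 ≤ C := le_trans (norm_nonneg _) (hC (x₀, 0) (Set.mem_prod.mpr
    ⟨mem_closedBall_self (by norm_num), ⟨le_rfl, le_of_lt hR0⟩⟩))
  have hbound_int : Integrable bound (volume.restrict (Set.Ioi (0:ℝ))) := by
    rw [hbdef, integrable_indicator_iff measurableSet_Icc]
    refine (integrableOn_const_iff (by simp)).mpr (Or.inr ?_)
    rw [Measure.restrict_apply measurableSet_Icc]
    exact lt_of_le_of_lt (measure_mono Set.inter_subset_left) measure_Icc_lt_top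
  have h_bound : ∀ᵐ t ∂(volume.restrict (Set.Ioi (0:ℝ))),
      ∀ x ∈ ball x₀ 1, ‖F' x t‖ ≤ bound t := by
    have hne : ∀ᵐ t : ℝ ∂(volume.restrict (Set.Ioi (0:ℝ))), t ≠ R := by
      refine ae_restrict_of_ae ?_
      have : volume ({R} : Set ℝ) = 0 := Real.volume_singleton
      rw [ae_iff]
      simpa [Ne, not_not, Set.setOf_eq_eq_singleton] using this
    filter_upwards [hne, ae_restrict_mem measurableSet_Ioi] with t htR ht0
    intro x hx
    rcases lt_or_gt_of_ne htR with hlt | hgt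
    · rw [hbdef, Set.indicator_of_mem (Set.mem_Icc.mpr ⟨le_of_lt ht0, le_of_lt hlt⟩) (fun _ => C)]
      exact hC (x, t) (Set.mem_prod.mpr ⟨ball_subset_closedBall hx, ⟨le_of_lt ht0, le_of_lt hlt⟩⟩)
    · rw [hF'zero x hx t hgt, hbdef, Set.indicator_of_notMem (fun hh => absurd hh.2 (not_le.mpr hgt))]
      simp [hC0]
  have hmain := hasFDerivAt_integral_of_dominated_of_fderiv_le (𝕜 := ℝ)
    (F := fun x t => rayF w f x t) (F' := F') (x₀ := x₀)
    (bound := bound) (s := ball x₀ 1) (μ := volume.restrict (Set.Ioi (0:ℝ)))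
    (ball_mem_nhds x₀ one_pos)
    (Filter.Eventually.of_forall (fun x => ((cont_rayF hw hf x).aestronglyMeasurable)))
    (integrableOn_rayF hw hf hsupp hunit x₀)
    ((hF'cont.comp (Continuous.prodMk_right x₀)).aestronglyMeasurable)
    h_bound
    hbound_int
    (Filter.Eventually.of_forall (fun t x _ => hdiff t x))
  exact ⟨-(∫ t in Set.Ioi (0:ℝ), F' x₀ t), hmain.neg⟩


lemma phi_dir (hw : ContDiff ℝ 1 w) (hf : ContDiff ℝ 2 f)
    (hsupp : tsupport f ⊆ disc) (hunit : ∀ x, dot (w x) (w x) = 1)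
    (hline : ∀ (x : ℝ × ℝ) (t : ℝ), 0 ≤ t → w (x + t • w x) = w x)
    (x₀ : ℝ × ℝ) {L : (ℝ × ℝ) →L[ℝ] ℝ} (hL : HasFDerivAt (phi w f) L x₀) :
    L (w x₀) = dot (perp (w x₀)) (f x₀) := by
  set c := w x₀ with hc
  -- the curve s ↦ x₀ + s • c
  have hcurve : HasDerivAt (fun s : ℝ => x₀ + s • c) c 0 := by
    simpa using ((hasDerivAt_id (0:ℝ)).smul_const c).const_add x₀
  have hL' : HasFDerivAt (phi w f) L (x₀ + (0:ℝ) • c) := by simpa using hL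
  have hδ : HasDerivAt (fun s : ℝ => phi w f (x₀ + s • c)) (L c) 0 :=
    (hL'.comp_hasDerivAt 0 hcurve :)
  -- FTC side
  have hccont : ContinuousAt (rayF w f x₀) 0 := ((cont_rayF hw hf x₀)).continuousAt
  have hψ : HasDerivAt (fun s : ℝ => ∫ t in (0:ℝ)..s, rayF w f x₀ t) (rayF w f x₀ 0) 0 := by
    refine intervalIntegral.integral_hasDerivAt_right
      ((cont_rayF hw hf x₀).intervalIntegrable 0 0)
      ((cont_rayF hw hf x₀).stronglyMeasurableAtFilter _ _) hccont
  have heq : ∀ s ∈ Set.Ici (0:ℝ),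
      phi w f (x₀ + s • c) = phi w f x₀ + ∫ t in (0:ℝ)..s, rayF w f x₀ t := by
    intro s hs
    exact phi_ray hw hf hsupp hunit hline x₀ hs
  have h1 : HasDerivWithinAt (fun s : ℝ => phi w f (x₀ + s • c)) (L c) (Set.Ici 0) 0 :=
    hδ.hasDerivWithinAt
  have h2 : HasDerivWithinAt (fun s : ℝ => phi w f (x₀ + s • c)) (rayF w f x₀ 0)
      (Set.Ici 0) 0 := by
    have h3 : HasDerivWithinAt (fun s : ℝ => phi w f x₀ + ∫ t in (0:ℝ)..s, rayF w f x₀ t)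
        (rayF w f x₀ 0) (Set.Ici 0) 0 := (hψ.const_add (phi w f x₀)).hasDerivWithinAt
    refine h3.congr heq ?_
    rw [heq 0 Set.self_mem_Ici]
  have huniq := (uniqueDiffOn_Ici (0:ℝ) 0 Set.self_mem_Ici).eq h1.hasFDerivWithinAt h2.hasFDerivWithinAt
  have := congrArg (fun T : ℝ →L[ℝ] ℝ => T 1) huniq
  simp at this
  rw [this]
  unfold rayF
  simp [hc]

lemma clm_ext {a b : ℝ × ℝ} (h : LinearIndependent ℝ ![a, b]) {L M : (ℝ × ℝ) →L[ℝ] ℝ}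
    (ha : L a = M a) (hb : L b = M b) : L = M := by
  have hcard : Fintype.card (Fin 2) = Module.finrank ℝ (ℝ × ℝ) := by
    simp [Module.finrank_prod]
  have hspan := h.span_eq_top_of_card_eq_finrank hcard
  have key : ∀ x ∈ Submodule.span ℝ (Set.range ![a, b]), L x = M x := by
    intro x hx
    induction hx using Submodule.span_induction with
    | mem y hy =>
      obtain ⟨i, rfl⟩ := hy
      fin_cases i
      · simpa using ha
      · simpa using hb
    | zero => simp
    | add y z _ _ hy hz => simp [hy, hz]
    | smul r y _ hy => simp [hy]
  exact ContinuousLinearMap.ext fun x => key x (hspan ▸ Submodule.mem_top)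

/-- the target derivative map -/
def tmap (f : ℝ × ℝ → ℝ × ℝ) (x : ℝ × ℝ) : (ℝ × ℝ) →L[ℝ] ℝ :=
  (f x).2 • (ContinuousLinearMap.fst ℝ ℝ ℝ) - (f x).1 • (ContinuousLinearMap.snd ℝ ℝ ℝ)

lemma tmap_apply (f : ℝ × ℝ → ℝ × ℝ) (x h : ℝ × ℝ) :
    tmap f x h = h.1 * (f x).2 - h.2 * (f x).1 := by
  simp [tmap, mul_comm]

lemma tmap_dir (f : ℝ × ℝ → ℝ × ℝ) (x : ℝ × ℝ) (c : ℝ × ℝ) :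
    tmap f x c = dot (perp c) (f x) := by
  simp [tmap_apply, dot, perp]; ring


lemma ray_integral_pgrad (hw : ContDiff ℝ 1 w) (hf : ContDiff ℝ 2 f)
    (hsupp : tsupport f ⊆ disc) (hunit : ∀ x, dot (w x) (w x) = 1)
    {φ : ℝ × ℝ → ℝ} (hφ : ContDiff ℝ 3 φ) (hφsupp : tsupport φ ⊆ disc)
    (hfeq : ∀ x, f x = pgrad φ x) (x : ℝ × ℝ) :
    ∫ t in Set.Ioi (0:ℝ), rayF w f x t = -φ x := by
  set c := w x with hc
  have hφd : Differentiable ℝ φ := hφ.differentiable (by norm_num)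
  have hcurve : ∀ t : ℝ, HasDerivAt (fun s : ℝ => x + s • c) c t := by
    intro t
    simpa using ((hasDerivAt_id t).smul_const c).const_add x
  have hderiv : ∀ t : ℝ, HasDerivAt (fun s : ℝ => φ (x + s • c)) (rayF w f x t) t := by
    intro t
    have h1 : HasDerivAt (fun s : ℝ => φ (x + s • c))
        (fderiv ℝ φ (x + t • c) c) t :=
      (hφd (x + t • c)).hasFDerivAt.comp_hasDerivAt t (hcurve t)
    have h2 : rayF w f x t = fderiv ℝ φ (x + t • c) c := by
      unfold rayF
      rw [← hc, hfeq]
      have hdec : c = c.1 • ((1:ℝ), (0:ℝ)) + c.2 • ((0:ℝ), (1:ℝ)) := by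
        simp [Prod.ext_iff]
      rw [show fderiv ℝ φ (x + t • c) c
          = c.1 * fderiv ℝ φ (x + t • c) (1, 0) + c.2 * fderiv ℝ φ (x + t • c) (0, 1) by
        set D := fderiv ℝ φ (x + t • c) with hD
        calc D c = D (c.1 • (1, 0) + c.2 • (0, 1)) := by rw [← hdec]
          _ = c.1 * D (1, 0) + c.2 * D (0, 1) := by
              rw [map_add, D.map_smul, D.map_smul]; simp]
      simp [pgrad, dot, perp]
      ring
    rw [h2]
    exact h1
  have hint : IntegrableOn (rayF w f x) (Set.Ioi (0:ℝ)) :=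
    integrableOn_rayF hw hf hsupp hunit x
  have htend : Filter.Tendsto (fun s : ℝ => φ (x + s • c)) Filter.atTop (nhds 0) := by
    have hev : ∀ᶠ s in Filter.atTop, φ (x + s • c) = 0 :=
      Filter.eventually_atTop.mpr
        ⟨2 * (|x.1| + |x.2|) + 1, fun s hs => far_zero hφsupp (hunit x) x hs⟩
    exact Filter.Tendsto.congr' (hev.mono fun s hs => hs.symm) tendsto_const_nhds
  have := integral_Ioi_of_hasDerivAt_of_tendsto
    (f := fun s : ℝ => φ (x + s • c)) (f' := rayF w f x) (a := 0) (m := 0)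
    ((hderiv 0).continuousAt.continuousWithinAt)
    (fun t _ => hderiv t) hint htend
  rw [this]
  simp

lemma pathconn {r : ℝ} (hr : 0 < r) :
    IsPathConnected {p : ℝ × ℝ | r < p.1 ^ 2 + p.2 ^ 2} := by
  set S : Set (ℝ × ℝ) := (Set.univ : Set ℝ) ×ˢ Set.Ioi (Real.sqrt r) with hS
  set Φ : ℝ × ℝ → ℝ × ℝ := fun q => (q.2 * Real.cos q.1, q.2 * Real.sin q.1) with hΦ
  have hSpc : IsPathConnected S := by
    refine (convex_univ.prod (convex_Ioi _)).isPathConnected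
      ⟨(0, Real.sqrt r + 1), Set.mem_prod.mpr ⟨trivial, ?_⟩⟩
    simp only [Set.mem_Ioi]
    linarith
  have hΦcont : Continuous Φ := by fun_prop
  have himg : Φ '' S = {p : ℝ × ℝ | r < p.1 ^ 2 + p.2 ^ 2} := by
    apply Set.eq_of_subset_of_subset
    · rintro p ⟨q, hq, rfl⟩
      obtain ⟨-, hq2⟩ := Set.mem_prod.mp hq
      simp only [Set.mem_Ioi] at hq2
      have h0 : (0:ℝ) ≤ Real.sqrt r := Real.sqrt_nonneg r
      have : Real.sqrt r ^ 2 < q.2 ^ 2 := by nlinarith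
      rw [Real.sq_sqrt hr.le] at this
      simp only [hΦ, Set.mem_setOf_eq]
      have hcs : Real.cos q.1 ^ 2 + Real.sin q.1 ^ 2 = 1 := Real.cos_sq_add_sin_sq q.1
      nlinarith
    · intro p hp
      simp only [Set.mem_setOf_eq] at hp
      set z : ℂ := ⟨p.1, p.2⟩ with hz
      have hns : Complex.normSq z = p.1 ^ 2 + p.2 ^ 2 := by
        simp [Complex.normSq_apply, hz, sq]
      have hz0 : z ≠ 0 := by
        intro h
        rw [h] at hns
        simp at hns
        nlinarith
      have habs : ‖z‖ = Real.sqrt (p.1 ^ 2 + p.2 ^ 2) := by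
        rw [Complex.norm_def, hns]
      have habs0 : 0 < ‖z‖ := by
        rw [habs]
        apply Real.sqrt_pos.mpr
        nlinarith
      refine ⟨(Complex.arg z, ‖z‖), Set.mem_prod.mpr ⟨trivial, ?_⟩, ?_⟩
      · simp only [Set.mem_Ioi, habs]
        exact Real.sqrt_lt_sqrt hr.le hp
      · have hcos : Real.cos (Complex.arg z) = p.1 / ‖z‖ := by
          simpa [hz] using Complex.cos_arg hz0
        have hsin : Real.sin (Complex.arg z) = p.2 / ‖z‖ := by
          simpa [hz] using Complex.sin_arg z
        simp only [hΦ]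
        rw [hcos, hsin]
        field_simp
  rw [← himg]
  exact hSpc.image hΦcont

open Metric in
lemma const_on {φ : ℝ × ℝ → ℝ} {D : (ℝ × ℝ) → ((ℝ × ℝ) →L[ℝ] ℝ)} {A : Set (ℝ × ℝ)}
    (hA : IsOpen A) (hconn : IsPreconnected A)
    (hd : ∀ x, HasFDerivAt φ (D x) x) (hD : ∀ x ∈ A, D x = 0)
    {a : ℝ × ℝ} (ha : a ∈ A) : ∀ x ∈ A, φ x = φ a := by
  have hloc : ∀ x ∈ A, ∃ ε > 0, ball x ε ⊆ A ∧ ∀ y ∈ ball x ε, φ y = φ x := by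
    intro x hx
    obtain ⟨ε, hε, hball⟩ := Metric.isOpen_iff.mp hA x hx
    refine ⟨ε, hε, hball, fun y hy => ?_⟩
    refine (convex_ball x ε).is_const_of_fderivWithin_eq_zero
      (fun z _ => (hd z).differentiableAt.differentiableWithinAt) ?_ hy (mem_ball_self hε)
    intro z hz
    rw [fderivWithin_of_isOpen isOpen_ball hz, (hd z).fderiv, hD z (hball hz)]
  by_contra hcon
  push_neg at hcon
  obtain ⟨b, hb, hbne⟩ := hcon
  set U : Set (ℝ × ℝ) := {x | ∃ ε > 0, ball x ε ⊆ A ∧ ∀ y ∈ ball x ε, φ y = φ a} with hU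
  set V : Set (ℝ × ℝ) := {x | ∃ ε > 0, ball x ε ⊆ A ∧ ∀ y ∈ ball x ε, φ y ≠ φ a} with hV
  have hhalf : ∀ (x : ℝ × ℝ) (ε : ℝ), 0 < ε → ∀ y ∈ ball x (ε/2), ball y (ε/2) ⊆ ball x ε := by
    intro x ε hε y hy z hz
    rw [mem_ball] at *
    calc dist z x ≤ dist z y + dist y x := dist_triangle z y x
      _ < ε/2 + ε/2 := by linarith
      _ = ε := by ring
  have hUopen : IsOpen U := by
    refine Metric.isOpen_iff.mpr fun x ⟨ε, hε, hbA, hbc⟩ => ⟨ε/2, by linarith, fun y hy => ?_⟩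
    exact ⟨ε/2, by linarith, (hhalf x ε hε y hy).trans hbA,
      fun z hz => hbc z (hhalf x ε hε y hy hz)⟩
  have hVopen : IsOpen V := by
    refine Metric.isOpen_iff.mpr fun x ⟨ε, hε, hbA, hbc⟩ => ⟨ε/2, by linarith, fun y hy => ?_⟩
    exact ⟨ε/2, by linarith, (hhalf x ε hε y hy).trans hbA,
      fun z hz => hbc z (hhalf x ε hε y hy hz)⟩
  have hcover : A ⊆ U ∪ V := by
    intro x hx
    obtain ⟨ε, hε, hbA, hbc⟩ := hloc x hx
    by_cases hxa : φ x = φ a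
    · exact Or.inl ⟨ε, hε, hbA, fun y hy => (hbc y hy).trans hxa⟩
    · exact Or.inr ⟨ε, hε, hbA, fun y hy => (hbc y hy).symm ▸ hxa⟩
  have haU : a ∈ A ∩ U := by
    obtain ⟨ε, hε, hbA, hbc⟩ := hloc a ha
    exact ⟨ha, ⟨ε, hε, hbA, hbc⟩⟩
  have hbV : b ∈ A ∩ V := by
    obtain ⟨ε, hε, hbA, hbc⟩ := hloc b hb
    exact ⟨hb, ⟨ε, hε, hbA, fun y hy => (hbc y hy).symm ▸ hbne⟩⟩
  obtain ⟨z, hzA, hzU, hzV⟩ := hconn U V hUopen hVopen hcover ⟨a, haU⟩ ⟨b, hbV⟩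
  obtain ⟨ε₁, hε₁, _, hc₁⟩ := hzU
  obtain ⟨ε₂, hε₂, _, hc₂⟩ := hzV
  exact hc₂ z (mem_ball_self hε₂) (hc₁ z (mem_ball_self hε₁))

end VLT


theorem stmt6
    (u v : ℝ × ℝ → ℝ × ℝ) (hu : ContDiff ℝ 1 u) (hv : ContDiff ℝ 1 v)
    (hunitu : ∀ x, dot (u x) (u x) = 1) (hunitv : ∀ x, dot (v x) (v x) = 1)
    (hlineu : ∀ (x : ℝ × ℝ) (t : ℝ), 0 ≤ t → u (x + t • u x) = u x)
    (hlinev : ∀ (x : ℝ × ℝ) (t : ℝ), 0 ≤ t → v (x + t • v x) = v x)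
    (hind : ∀ x, LinearIndependent ℝ ![u x, v x])
    (f : ℝ × ℝ → ℝ × ℝ) (hf : ContDiff ℝ 2 f)
    (hcs : HasCompactSupport f) (hsupp : tsupport f ⊆ disc) :
    (∀ x, T1 u v f x = 0) ↔
      ∃ φ : ℝ × ℝ → ℝ, ContDiff ℝ 3 φ ∧ tsupport φ ⊆ disc ∧ ∀ x, f x = pgrad φ x := by
  constructor
  · intro hT
    set φ : ℝ × ℝ → ℝ := VLT.phi u f with hφdef
    have heq : VLT.phi u f = VLT.phi v f := by
      funext x
      have hx := hT x
      unfold T1 at hx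
      unfold VLT.phi VLT.rayF
      linarith
    have hfd : ∀ x, HasFDerivAt φ (VLT.tmap f x) x := by
      intro x
      obtain ⟨L, hL⟩ := VLT.phi_hasFDerivAt hu hf hsupp hunitu x
      have hueq := VLT.phi_dir hu hf hsupp hunitu hlineu x hL
      have hLv : HasFDerivAt (VLT.phi v f) L x := heq ▸ hL
      have hveq := VLT.phi_dir hv hf hsupp hunitv hlinev x hLv
      have hLt : L = VLT.tmap f x :=
        VLT.clm_ext (hind x) (by rw [hueq, VLT.tmap_dir]) (by rw [hveq, VLT.tmap_dir])
      exact hLt ▸ hL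
    have hfderiv : ∀ x, fderiv ℝ φ x = VLT.tmap f x := fun x => (hfd x).fderiv
    obtain ⟨r, hrhalf, hr1, hrK⟩ : ∃ r : ℝ, 1/2 ≤ r ∧ r < 1 ∧
        ∀ p ∈ tsupport f, p.1 ^ 2 + p.2 ^ 2 ≤ r := by
      rcases (tsupport f).eq_empty_or_nonempty with hK | hK
      · exact ⟨1/2, le_rfl, by norm_num,
          fun p hp => by rw [hK] at hp; exact absurd hp (Set.notMem_empty p)⟩
      · have hKc : IsCompact (tsupport f) := hcs
        obtain ⟨p₀, hp₀, hmax⟩ := hKc.exists_isMaxOn hK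
          ((by fun_prop : Continuous fun p : ℝ × ℝ => p.1 ^ 2 + p.2 ^ 2).continuousOn)
        have hd : p₀.1 ^ 2 + p₀.2 ^ 2 < 1 := hsupp hp₀
        exact ⟨max (p₀.1 ^ 2 + p₀.2 ^ 2) (1/2), le_max_right _ _,
          max_lt hd (by norm_num),
          fun p hp => le_trans (hmax hp) (le_max_left _ _)⟩
    set A := {p : ℝ × ℝ | r < p.1 ^ 2 + p.2 ^ 2} with hA
    have hAopen : IsOpen A := isOpen_lt continuous_const (by fun_prop)
    have hApc : IsPathConnected A := VLT.pathconn (by linarith)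
    have hD0 : ∀ x ∈ A, VLT.tmap f x = 0 := by
      intro x hx
      have hxK : x ∉ tsupport f := fun hmem => absurd (hrK x hmem) (not_le.mpr hx)
      have hx0 : f x = 0 := image_eq_zero_of_notMem_tsupport hxK
      simp [VLT.tmap, hx0]
    have hT5 : 2 * (|((2:ℝ), (0:ℝ)).1| + |((2:ℝ), (0:ℝ)).2|) + 1 ≤ (5:ℝ) := by norm_num
    have hφa : φ (((2:ℝ), (0:ℝ)) + (5:ℝ) • u (2, 0)) = 0 :=
      VLT.phi_far hlineu hsupp hunitu (2, 0) hT5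
    have haA : (((2:ℝ), (0:ℝ)) + (5:ℝ) • u (2, 0)) ∈ A := by
      have hnd := VLT.notin_disc (hunitu (2, 0)) (2, 0) hT5
      simp only [disc, Set.mem_setOf_eq, not_lt] at hnd
      simp only [hA, Set.mem_setOf_eq]
      linarith
    have hconst := VLT.const_on hAopen hApc.isConnected.isPreconnected hfd hD0 haA
    have hzeroA : ∀ x ∈ A, φ x = 0 := fun x hx => (hconst x hx).trans hφa
    refine ⟨φ, ?_, ?_, ?_⟩
    · have h2 : ContDiff ℝ 2 (fun x => VLT.tmap f x) := by
        unfold VLT.tmap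
        exact ((contDiff_snd.comp hf).smul contDiff_const).sub
          ((contDiff_fst.comp hf).smul contDiff_const)
      have h3 : ContDiff ℝ (2 + 1) φ := contDiff_succ_iff_fderiv.mpr
        ⟨fun x => (hfd x).differentiableAt, by intro h; exact absurd h (by norm_num),
         by rw [funext hfderiv]; exact h2⟩
      norm_num at h3
      exact h3
    · have hsub : Function.support φ ⊆ {p : ℝ × ℝ | p.1 ^ 2 + p.2 ^ 2 ≤ r} := by
        intro p hp
        by_contra hnot
        simp only [Set.mem_setOf_eq, not_le] at hnot
        exact hp (hzeroA p hnot)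
      have hclosed : IsClosed {p : ℝ × ℝ | p.1 ^ 2 + p.2 ^ 2 ≤ r} :=
        isClosed_le (by fun_prop) continuous_const
      intro p hp
      have hmem := closure_minimal hsub hclosed hp
      simp only [Set.mem_setOf_eq] at hmem
      simp only [disc, Set.mem_setOf_eq]
      linarith
    · intro x
      have h01 := hfderiv x
      have e1 : fderiv ℝ φ x (0, 1) = -(f x).1 := by rw [h01, VLT.tmap_apply]; ring
      have e2 : fderiv ℝ φ x (1, 0) = (f x).2 := by rw [h01, VLT.tmap_apply]; ring
      rw [pgrad, e1, e2]
      simp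
  · rintro ⟨φ, hφ, hφsupp, hfeq⟩ x
    have h1 := VLT.ray_integral_pgrad hu hf hsupp hunitu hφ hφsupp hfeq x
    have h2 := VLT.ray_integral_pgrad hv hf hsupp hunitv hφ hφsupp hfeq x
    have hT : T1 u v f x = (- ∫ t in Set.Ioi (0:ℝ), VLT.rayF u f x t)
        + ∫ t in Set.Ioi (0:ℝ), VLT.rayF v f x t := rfl
    rw [hT, h1, h2]
    ring
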